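/- arXiv:2212.10780 — 3 statements merged into one kernel-verified Lean document; each statement's English description precedes it below -/
import Mathlib

section
/- Let ‖·‖_α be a uniform crossnorm and let ‖·‖_{[α,α]} denote the operator norm on B[X⊗_α Y, V⊗_α W], restricted to B[X,V]⊗B[Y,W]. Then ‖L‖_ε ≤ ‖L‖_{[α,α]} for every L ∈ B[X,V]⊗B[Y,W], where ‖·‖_ε is the injective norm on B[X,V]⊗B[Y,W] (with respect to the duals B[X,V]* and B[Y,W]*). -/
open scoped TensorProduct
open TensorProduct

noncomputable section

variable (𝕜 : Type*) [RCLike 𝕜]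
variable {E F G H : Type*}
  [NormedAddCommGroup E] [NormedSpace 𝕜 E]
  [NormedAddCommGroup F] [NormedSpace 𝕜 F]
  [NormedAddCommGroup G] [NormedSpace 𝕜 G]
  [NormedAddCommGroup H] [NormedSpace 𝕜 H]

/-- `N` is a norm on the `𝕜`-module `M`. -/
def IsNormOn {M : Type*} [AddCommGroup M] [Module 𝕜 M] (N : M → ℝ) : Prop :=
  (∀ u, N u = 0 ↔ u = 0) ∧ (∀ (c : 𝕜) (u : M), N (c • u) = ‖c‖ * N u) ∧
    (∀ u v : M, N (u + v) ≤ N u + N v)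

/-- The linear functional `f ⊗ g` on `E ⊗ F`, with `(f ⊗ g)(x ⊗ y) = f x * g y`. -/
def dualTensorFun (f : E →L[𝕜] 𝕜) (g : F →L[𝕜] 𝕜) : E ⊗[𝕜] F →ₗ[𝕜] 𝕜 :=
  (TensorProduct.lid 𝕜 𝕜).toLinearMap ∘ₗ
    TensorProduct.map (f : E →ₗ[𝕜] 𝕜) (g : F →ₗ[𝕜] 𝕜)

/-- The injective norm on the algebraic tensor product of normed spaces. -/
def injNorm (u : E ⊗[𝕜] F) : ℝ :=
  sSup {r | ∃ (f : E →L[𝕜] 𝕜) (g : F →L[𝕜] 𝕜),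
    ‖f‖ ≤ 1 ∧ ‖g‖ ≤ 1 ∧ r = ‖dualTensorFun 𝕜 f g u‖}

/-- The projective norm on the algebraic tensor product of normed spaces. -/
def projNorm (u : E ⊗[𝕜] F) : ℝ :=
  sInf {r | ∃ l : List (E × F), u = (l.map fun p => p.1 ⊗ₜ[𝕜] p.2).sum ∧
    r = (l.map fun p => ‖p.1‖ * ‖p.2‖).sum}

/-- `N` is a reasonable crossnorm on `E ⊗ F`: it is a norm, `N (x ⊗ y) ≤ ‖x‖‖y‖`, and every
`f ⊗ g` with `f, g` continuous functionals is bounded with dual norm at most `‖f‖‖g‖`. -/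
def IsReasonableCrossnorm (N : E ⊗[𝕜] F → ℝ) : Prop :=
  IsNormOn 𝕜 N ∧ (∀ (x : E) (y : F), N (x ⊗ₜ[𝕜] y) ≤ ‖x‖ * ‖y‖) ∧
    ∀ (f : E →L[𝕜] 𝕜) (g : F →L[𝕜] 𝕜) (u : E ⊗[𝕜] F),
      ‖dualTensorFun 𝕜 f g u‖ ≤ ‖f‖ * ‖g‖ * N u

/-- `T` is bounded from `(E ⊗ F, Nd)` to `(G ⊗ H, Nc)`. -/
def IsBddOn (Nd : E ⊗[𝕜] F → ℝ) (Nc : G ⊗[𝕜] H → ℝ)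
    (T : E ⊗[𝕜] F →ₗ[𝕜] G ⊗[𝕜] H) : Prop :=
  ∃ c : ℝ, 0 ≤ c ∧ ∀ u, Nc (T u) ≤ c * Nd u

/-- The operator norm of `T` from `(E ⊗ F, Nd)` to `(G ⊗ H, Nc)`. -/
def opNormOn (Nd : E ⊗[𝕜] F → ℝ) (Nc : G ⊗[𝕜] H → ℝ)
    (T : E ⊗[𝕜] F →ₗ[𝕜] G ⊗[𝕜] H) : ℝ :=
  sInf {c | 0 ≤ c ∧ ∀ u, Nc (T u) ≤ c * Nd u}

/-- The dual norm of a linear functional `φ` on `(E ⊗ F, N)`. -/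
def dualNormOn (N : E ⊗[𝕜] F → ℝ) (φ : E ⊗[𝕜] F →ₗ[𝕜] 𝕜) : ℝ :=
  sInf {c | 0 ≤ c ∧ ∀ u, ‖φ u‖ ≤ c * N u}

/-- The pair of norms `(NA, NB)` is uniform: `A ⊗ B` is bounded with bound `‖A‖‖B‖`. -/
def IsUniformPair (NA : E ⊗[𝕜] F → ℝ) (NB : G ⊗[𝕜] H → ℝ) : Prop :=
  ∀ (A : E →L[𝕜] G) (B : F →L[𝕜] H) (u : E ⊗[𝕜] F),
    NB (TensorProduct.map (A : E →ₗ[𝕜] G) (B : F →ₗ[𝕜] H) u) ≤ ‖A‖ * ‖B‖ * NA u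

/-- The canonical action of `B[E,G] ⊗ B[F,H]` as linear maps from `E ⊗ F` to `G ⊗ H`,
sending `Σⱼ Aⱼ ⊗ Bⱼ` to `Σᵢ xᵢ ⊗ yᵢ ↦ Σⱼ Σᵢ Aⱼxᵢ ⊗ Bⱼyᵢ`. -/
def opT : ((E →L[𝕜] G) ⊗[𝕜] (F →L[𝕜] H)) →ₗ[𝕜] (E ⊗[𝕜] F →ₗ[𝕜] G ⊗[𝕜] H) :=
  (TensorProduct.homTensorHomMap (RingHom.id 𝕜) E F G H) ∘ₗ
    TensorProduct.map (ContinuousLinearMap.coeLM 𝕜) (ContinuousLinearMap.coeLM 𝕜)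

variable {X Y V W : Type*}
  [NormedAddCommGroup X] [NormedSpace 𝕜 X]
  [NormedAddCommGroup Y] [NormedSpace 𝕜 Y]
  [NormedAddCommGroup V] [NormedSpace 𝕜 V]
  [NormedAddCommGroup W] [NormedSpace 𝕜 W]

section Stmt8Aux

lemma isNormOn.nonneg {M : Type*} [AddCommGroup M] [Module 𝕜 M]
    {N : M → ℝ} (h : IsNormOn 𝕜 N) (u : M) : 0 ≤ N u := by
  have h0 : N (0 : M) = 0 := (h.1 0).2 rfl
  have hneg : N (-u) = N u := by
    have := h.2.1 (-1 : 𝕜) u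
    simpa using this
  have htri := h.2.2 u (-u)
  rw [add_neg_cancel, h0, hneg] at htri
  linarith


/-- Contraction of the left factor by a functional `f`. -/
def contractL (f : (X →L[𝕜] V) →L[𝕜] 𝕜) :
    ((X →L[𝕜] V) ⊗[𝕜] (Y →L[𝕜] W)) →ₗ[𝕜] (Y →L[𝕜] W) :=
  (TensorProduct.lid 𝕜 (Y →L[𝕜] W)).toLinearMap ∘ₗ
    TensorProduct.map (f : (X →L[𝕜] V) →ₗ[𝕜] 𝕜) LinearMap.id

@[simp] lemma contractL_tmul (f : (X →L[𝕜] V) →L[𝕜] 𝕜)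
    (A : X →L[𝕜] V) (B : Y →L[𝕜] W) :
    contractL 𝕜 f (A ⊗ₜ[𝕜] B) = f A • B := by
  simp [contractL]

/-- Contraction of the right factor by the functional `B ↦ w (B y)`. -/
def contractR (w : W →L[𝕜] 𝕜) (y : Y) :
    ((X →L[𝕜] V) ⊗[𝕜] (Y →L[𝕜] W)) →ₗ[𝕜] (X →L[𝕜] V) :=
  (TensorProduct.rid 𝕜 (X →L[𝕜] V)).toLinearMap ∘ₗ
    TensorProduct.map LinearMap.id
      ((w.comp (ContinuousLinearMap.apply 𝕜 W y) : (Y →L[𝕜] W) →L[𝕜] 𝕜) :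
        (Y →L[𝕜] W) →ₗ[𝕜] 𝕜)

@[simp] lemma contractR_tmul (w : W →L[𝕜] 𝕜) (y : Y)
    (A : X →L[𝕜] V) (B : Y →L[𝕜] W) :
    contractR 𝕜 w y (A ⊗ₜ[𝕜] B) = w (B y) • A := by
  simp [contractR]

lemma dualTensorFun_eq_g_contractL (f : (X →L[𝕜] V) →L[𝕜] 𝕜)
    (g : (Y →L[𝕜] W) →L[𝕜] 𝕜) (L : (X →L[𝕜] V) ⊗[𝕜] (Y →L[𝕜] W)) :
    dualTensorFun 𝕜 f g L = g (contractL 𝕜 f L) := by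
  induction L with
  | zero => simp [dualTensorFun]
  | tmul A B => simp [dualTensorFun, smul_eq_mul]
  | add u v hu hv => simp [map_add, hu, hv]

lemma contractL_apply_eq (f : (X →L[𝕜] V) →L[𝕜] 𝕜) (w : W →L[𝕜] 𝕜) (y : Y)
    (L : (X →L[𝕜] V) ⊗[𝕜] (Y →L[𝕜] W)) :
    w (contractL 𝕜 f L y) = f (contractR 𝕜 w y L) := by
  induction L with
  | zero => simp
  | tmul A B => simp [smul_eq_mul, mul_comm]
  | add u v hu hv => simp [map_add, hu, hv]

lemma contractR_apply_eq (v : V →L[𝕜] 𝕜) (w : W →L[𝕜] 𝕜) (x : X) (y : Y)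
    (L : (X →L[𝕜] V) ⊗[𝕜] (Y →L[𝕜] W)) :
    v (contractR 𝕜 w y L x) = dualTensorFun 𝕜 v w (opT 𝕜 L (x ⊗ₜ[𝕜] y)) := by
  induction L with
  | zero => simp [opT]
  | tmul A B => simp [opT, dualTensorFun, smul_eq_mul, mul_comm]
  | add u v huu hvv => simp [map_add, LinearMap.add_apply, huu, hvv]

lemma key_bound (NA : X ⊗[𝕜] Y → ℝ) (NB : V ⊗[𝕜] W → ℝ)
    (hNA : IsReasonableCrossnorm 𝕜 NA) (hNB : IsReasonableCrossnorm 𝕜 NB)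
    (L : (X →L[𝕜] V) ⊗[𝕜] (Y →L[𝕜] W))
    (f : (X →L[𝕜] V) →L[𝕜] 𝕜) (g : (Y →L[𝕜] W) →L[𝕜] 𝕜)
    (hf : ‖f‖ ≤ 1) (hg : ‖g‖ ≤ 1) (c : ℝ) (hc : 0 ≤ c)
    (hcb : ∀ u, NB (opT 𝕜 L u) ≤ c * NA u) :
    ‖dualTensorFun 𝕜 f g L‖ ≤ c := by
  have hNBnn : ∀ u, 0 ≤ NB u := isNormOn.nonneg 𝕜 hNB.1
  -- bound the operator `contractL f L`
  have hSf : ‖contractL 𝕜 f L‖ ≤ c := by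
    refine ContinuousLinearMap.opNorm_le_bound _ hc (fun y => ?_)
    obtain ⟨w, hw1, hwx⟩ := exists_dual_vector'' 𝕜 (contractL 𝕜 f L y)
    -- bound the operator `contractR w y L`
    have hTw : ‖contractR 𝕜 w y L‖ ≤ c * ‖y‖ := by
      refine ContinuousLinearMap.opNorm_le_bound _
        (mul_nonneg hc (norm_nonneg y)) (fun x => ?_)
      obtain ⟨v, hv1, hvx⟩ := exists_dual_vector'' 𝕜 (contractR 𝕜 w y L x)
      have h1 : ‖contractR 𝕜 w y L x‖ = ‖v (contractR 𝕜 w y L x)‖ := by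
        rw [hvx]; simp
      rw [h1, contractR_apply_eq]
      calc ‖dualTensorFun 𝕜 v w (opT 𝕜 L (x ⊗ₜ[𝕜] y))‖
          ≤ ‖v‖ * ‖w‖ * NB (opT 𝕜 L (x ⊗ₜ[𝕜] y)) := hNB.2.2 v w _
        _ ≤ 1 * 1 * NB (opT 𝕜 L (x ⊗ₜ[𝕜] y)) := by
            apply mul_le_mul_of_nonneg_right _ (hNBnn _)
            exact mul_le_mul hv1 hw1 (norm_nonneg w) zero_le_one
        _ = NB (opT 𝕜 L (x ⊗ₜ[𝕜] y)) := by ring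
        _ ≤ c * NA (x ⊗ₜ[𝕜] y) := hcb _
        _ ≤ c * (‖x‖ * ‖y‖) := mul_le_mul_of_nonneg_left (hNA.2.1 x y) hc
        _ = c * ‖y‖ * ‖x‖ := by ring
    have h2 : ‖contractL 𝕜 f L y‖ = ‖w (contractL 𝕜 f L y)‖ := by
      rw [hwx]; simp
    rw [h2, contractL_apply_eq]
    calc ‖f (contractR 𝕜 w y L)‖ ≤ ‖f‖ * ‖contractR 𝕜 w y L‖ := f.le_opNorm _
      _ ≤ 1 * (c * ‖y‖) := by
          apply mul_le_mul hf hTw (norm_nonneg _) zero_le_one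
      _ = c * ‖y‖ := one_mul _
  rw [dualTensorFun_eq_g_contractL]
  calc ‖g (contractL 𝕜 f L)‖ ≤ ‖g‖ * ‖contractL 𝕜 f L‖ := g.le_opNorm _
    _ ≤ 1 * c := mul_le_mul hg hSf (norm_nonneg _) zero_le_one
    _ = c := one_mul c

lemma opT_bdd (NA : X ⊗[𝕜] Y → ℝ) (NB : V ⊗[𝕜] W → ℝ)
    (hNA : IsReasonableCrossnorm 𝕜 NA) (hNB : IsReasonableCrossnorm 𝕜 NB)
    (hu : IsUniformPair 𝕜 NA NB) (L : (X →L[𝕜] V) ⊗[𝕜] (Y →L[𝕜] W)) :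
    ∃ c : ℝ, 0 ≤ c ∧ ∀ u, NB (opT 𝕜 L u) ≤ c * NA u := by
  have hNAnn : ∀ u, 0 ≤ NA u := isNormOn.nonneg 𝕜 hNA.1
  induction L with
  | zero =>
      exact ⟨0, le_refl 0, fun u => by
        simp [(hNB.1.1 0).2 rfl]⟩
  | tmul A B =>
      refine ⟨‖A‖ * ‖B‖, mul_nonneg (norm_nonneg A) (norm_nonneg B), fun u => ?_⟩
      have : opT 𝕜 (A ⊗ₜ[𝕜] B) =
          TensorProduct.map (A : X →ₗ[𝕜] V) (B : Y →ₗ[𝕜] W) := by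
        simp [opT, ContinuousLinearMap.coeLM]
      rw [this]
      exact hu A B u
  | add u v huu hvv =>
      obtain ⟨c₁, hc₁, hb₁⟩ := huu
      obtain ⟨c₂, hc₂, hb₂⟩ := hvv
      refine ⟨c₁ + c₂, by linarith, fun z => ?_⟩
      have : opT 𝕜 (u + v) z = opT 𝕜 u z + opT 𝕜 v z := by
        simp [map_add]
      rw [this]
      calc NB (opT 𝕜 u z + opT 𝕜 v z) ≤ NB (opT 𝕜 u z) + NB (opT 𝕜 v z) :=
            hNB.1.2.2 _ _
        _ ≤ c₁ * NA z + c₂ * NA z := add_le_add (hb₁ z) (hb₂ z)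
        _ = (c₁ + c₂) * NA z := by ring

end Stmt8Aux

/-- `‖L‖_ε ≤ ‖L‖_{[α,α]}` on `B[X,V] ⊗ B[Y,W]`. -/
theorem stmt8 (NA : X ⊗[𝕜] Y → ℝ) (NB : V ⊗[𝕜] W → ℝ)
    (hNA : IsReasonableCrossnorm 𝕜 NA) (hNB : IsReasonableCrossnorm 𝕜 NB)
    (hu : IsUniformPair 𝕜 NA NB) :
    ∀ L : (X →L[𝕜] V) ⊗[𝕜] (Y →L[𝕜] W),
      injNorm 𝕜 L ≤ opNormOn 𝕜 NA NB (opT 𝕜 L) := by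
  intro L
  set S : Set ℝ := {c | 0 ≤ c ∧ ∀ u, NB (opT 𝕜 L u) ≤ c * NA u} with hS
  have hSne : S.Nonempty := by
    obtain ⟨c, hc, hb⟩ := opT_bdd 𝕜 NA NB hNA hNB hu L
    exact ⟨c, hc, hb⟩
  have hop_nonneg : 0 ≤ opNormOn 𝕜 NA NB (opT 𝕜 L) :=
    Real.sInf_nonneg (fun c hc => hc.1)
  refine Real.sSup_le ?_ hop_nonneg
  rintro r ⟨f, g, hf, hg, rfl⟩
  refine le_csInf hSne ?_
  rintro c ⟨hc, hcb⟩
  exact key_bound 𝕜 NA NB hNA hNB L f g hf hg c hc hcb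
end
end

section
/- If ‖·‖_α is a uniform crossnorm, then for all φ ∈ B[X,V]* and η ∈ B[Y,W]*, the tensor functional φ⊗η is bounded on (B[X,V]⊗B[Y,W], ‖·‖_{[α,α]}) with ‖φ⊗η‖_{*[α,α]} ≤ ‖φ‖·‖η‖; consequently B[X,V]*⊗B[Y,W]* ⊆ (B[X,V]⊗_{[α,α]}B[Y,W])*. -/
open scoped TensorProduct
open TensorProduct

noncomputable section

variable (𝕜 : Type*) [RCLike 𝕜]
variable {E F G H : Type*}
  [NormedAddCommGroup E] [NormedSpace 𝕜 E]
  [NormedAddCommGroup F] [NormedSpace 𝕜 F]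
  [NormedAddCommGroup G] [NormedSpace 𝕜 G]
  [NormedAddCommGroup H] [NormedSpace 𝕜 H]

namespace Stmt11Aux

lemma isNormOn_nonneg {M : Type*} [AddCommGroup M] [Module 𝕜 M] {N : M → ℝ}
    (hN : IsNormOn 𝕜 N) (u : M) : 0 ≤ N u := by
  have h0 : N (0 : M) = 0 := (hN.1 0).2 rfl
  have hneg : N (-u) = N u := by simpa using hN.2.1 (-1 : 𝕜) u
  have htri := hN.2.2 u (-u)
  rw [add_neg_cancel, h0, hneg] at htri
  linarith

/-- Contraction with a functional on the second factor. -/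
def rEta (g : F →L[𝕜] 𝕜) : (E ⊗[𝕜] F) →ₗ[𝕜] E :=
  (TensorProduct.rid 𝕜 E).toLinearMap ∘ₗ
    TensorProduct.map (LinearMap.id) (g : F →ₗ[𝕜] 𝕜)

/-- Contraction with a functional on the first factor. -/
def sF (f : E →L[𝕜] 𝕜) : (E ⊗[𝕜] F) →ₗ[𝕜] F :=
  (TensorProduct.lid 𝕜 F).toLinearMap ∘ₗ
    TensorProduct.map (f : E →ₗ[𝕜] 𝕜) (LinearMap.id)

lemma dtf_eq_rEta (f : E →L[𝕜] 𝕜) (g : F →L[𝕜] 𝕜) (u : E ⊗[𝕜] F) :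
    dualTensorFun 𝕜 f g u = f (rEta 𝕜 g u) := by
  induction u using TensorProduct.induction_on with
  | zero => simp [dualTensorFun, rEta]
  | tmul x y => simp [dualTensorFun, rEta, smul_eq_mul, mul_comm]
  | add x y hx hy => simp [map_add, hx, hy]

lemma dtf_eq_sF (f : E →L[𝕜] 𝕜) (g : F →L[𝕜] 𝕜) (u : E ⊗[𝕜] F) :
    dualTensorFun 𝕜 f g u = g (sF 𝕜 f u) := by
  induction u using TensorProduct.induction_on with
  | zero => simp [dualTensorFun, sF]
  | tmul x y => simp [dualTensorFun, sF, smul_eq_mul, mul_comm]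
  | add x y hx hy => simp [map_add, hx, hy]

lemma dtf_opT (v : G →L[𝕜] 𝕜) (w : H →L[𝕜] 𝕜) (x : E) (y : F)
    (L : (E →L[𝕜] G) ⊗[𝕜] (F →L[𝕜] H)) :
    dualTensorFun 𝕜 (v.comp (ContinuousLinearMap.apply 𝕜 G x))
        (w.comp (ContinuousLinearMap.apply 𝕜 H y)) L
      = dualTensorFun 𝕜 v w (opT 𝕜 L (x ⊗ₜ[𝕜] y)) := by
  induction L using TensorProduct.induction_on with
  | zero => simp
  | tmul A B => simp [dualTensorFun, opT, ContinuousLinearMap.coeLM]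
  | add L1 L2 h1 h2 => simp [map_add, LinearMap.add_apply, h1, h2]

lemma opT_isBdd {NA : E ⊗[𝕜] F → ℝ} {NB : G ⊗[𝕜] H → ℝ}
    (hNB : IsReasonableCrossnorm 𝕜 NB) (hu : IsUniformPair 𝕜 NA NB)
    (L : (E →L[𝕜] G) ⊗[𝕜] (F →L[𝕜] H)) :
    ∃ c : ℝ, 0 ≤ c ∧ ∀ u, NB (opT 𝕜 L u) ≤ c * NA u := by
  induction L using TensorProduct.induction_on with
  | zero =>
    refine ⟨0, le_refl 0, fun u => ?_⟩
    have : NB (0 : G ⊗[𝕜] H) = 0 := (hNB.1.1 0).2 rfl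
    simp [this]
  | tmul A B =>
    refine ⟨‖A‖ * ‖B‖, mul_nonneg (norm_nonneg A) (norm_nonneg B), fun u => ?_⟩
    have := hu A B u
    simpa [opT, ContinuousLinearMap.coeLM] using this
  | add L1 L2 h1 h2 =>
    obtain ⟨c1, hc10, hc1⟩ := h1
    obtain ⟨c2, hc20, hc2⟩ := h2
    refine ⟨c1 + c2, by linarith, fun u => ?_⟩
    have hadd : opT 𝕜 (L1 + L2) u = opT 𝕜 L1 u + opT 𝕜 L2 u := by
      simp [map_add, LinearMap.add_apply]
    rw [hadd]
    calc NB (opT 𝕜 L1 u + opT 𝕜 L2 u) ≤ NB (opT 𝕜 L1 u) + NB (opT 𝕜 L2 u) :=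
          hNB.1.2.2 _ _
      _ ≤ c1 * NA u + c2 * NA u := add_le_add (hc1 u) (hc2 u)
      _ = (c1 + c2) * NA u := by ring

lemma opNormOn_spec {NA : E ⊗[𝕜] F → ℝ} {NB : G ⊗[𝕜] H → ℝ}
    (hNA : IsReasonableCrossnorm 𝕜 NA) (hNB : IsReasonableCrossnorm 𝕜 NB)
    (hu : IsUniformPair 𝕜 NA NB) (L : (E →L[𝕜] G) ⊗[𝕜] (F →L[𝕜] H)) :
    0 ≤ opNormOn 𝕜 NA NB (opT 𝕜 L) ∧
      ∀ u, NB (opT 𝕜 L u) ≤ opNormOn 𝕜 NA NB (opT 𝕜 L) * NA u := by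
  have hne : {c : ℝ | 0 ≤ c ∧ ∀ u, NB (opT 𝕜 L u) ≤ c * NA u}.Nonempty :=
    opT_isBdd 𝕜 hNB hu L
  have h0 : 0 ≤ opNormOn 𝕜 NA NB (opT 𝕜 L) :=
    le_csInf hne fun c hc => hc.1
  refine ⟨h0, fun u => ?_⟩
  by_cases hu0 : u = 0
  · subst hu0
    have hA : NA (0 : E ⊗[𝕜] F) = 0 := (hNA.1.1 0).2 rfl
    have hB : NB (0 : G ⊗[𝕜] H) = 0 := (hNB.1.1 0).2 rfl
    simp [hA, hB]
  · have hpos : 0 < NA u := by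
      rcases lt_or_eq_of_le (isNormOn_nonneg 𝕜 hNA.1 u) with h | h
      · exact h
      · exact absurd ((hNA.1.1 u).1 h.symm) hu0
    have hdiv : NB (opT 𝕜 L u) / NA u ≤ opNormOn 𝕜 NA NB (opT 𝕜 L) :=
      le_csInf hne fun c hc => (div_le_iff₀ hpos).2 (hc.2 u)
    exact (div_le_iff₀ hpos).1 hdiv

end Stmt11Aux

variable {X Y V W : Type*}
  [NormedAddCommGroup X] [NormedSpace 𝕜 X]
  [NormedAddCommGroup Y] [NormedSpace 𝕜 Y]
  [NormedAddCommGroup V] [NormedSpace 𝕜 V]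
  [NormedAddCommGroup W] [NormedSpace 𝕜 W]

/-- `φ ⊗ η` is bounded on `(B[X,V] ⊗ B[Y,W], ‖·‖_{[α,α]})` with norm at most
`‖φ‖‖η‖`. -/
theorem stmt11 (NA : X ⊗[𝕜] Y → ℝ) (NB : V ⊗[𝕜] W → ℝ)
    (hNA : IsReasonableCrossnorm 𝕜 NA) (hNB : IsReasonableCrossnorm 𝕜 NB)
    (hu : IsUniformPair 𝕜 NA NB) :
    ∀ (φ : (X →L[𝕜] V) →L[𝕜] 𝕜) (η : (Y →L[𝕜] W) →L[𝕜] 𝕜)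
      (L : (X →L[𝕜] V) ⊗[𝕜] (Y →L[𝕜] W)),
        ‖dualTensorFun 𝕜 φ η L‖ ≤ ‖φ‖ * ‖η‖ * opNormOn 𝕜 NA NB (opT 𝕜 L) := by
  intro φ η L
  obtain ⟨hc0, hc⟩ := Stmt11Aux.opNormOn_spec 𝕜 hNA hNB hu L
  set c := opNormOn 𝕜 NA NB (opT 𝕜 L) with hcdef
  have key : ∀ (v : V →L[𝕜] 𝕜) (w : W →L[𝕜] 𝕜), ‖v‖ ≤ 1 → ‖w‖ ≤ 1 → ∀ (x : X) (y : Y),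
      ‖dualTensorFun 𝕜 (v.comp (ContinuousLinearMap.apply 𝕜 V x))
        (w.comp (ContinuousLinearMap.apply 𝕜 W y)) L‖ ≤ c * (‖x‖ * ‖y‖) := by
    intro v w hv hw x y
    rw [Stmt11Aux.dtf_opT]
    have hNBn : 0 ≤ NB (opT 𝕜 L (x ⊗ₜ[𝕜] y)) := Stmt11Aux.isNormOn_nonneg 𝕜 hNB.1 _
    calc ‖dualTensorFun 𝕜 v w (opT 𝕜 L (x ⊗ₜ[𝕜] y))‖
        ≤ ‖v‖ * ‖w‖ * NB (opT 𝕜 L (x ⊗ₜ[𝕜] y)) := hNB.2.2 v w _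
      _ ≤ 1 * 1 * NB (opT 𝕜 L (x ⊗ₜ[𝕜] y)) := by
          exact mul_le_mul (mul_le_mul hv hw (norm_nonneg w) zero_le_one) le_rfl hNBn (by norm_num)
      _ = NB (opT 𝕜 L (x ⊗ₜ[𝕜] y)) := by ring
      _ ≤ c * NA (x ⊗ₜ[𝕜] y) := hc _
      _ ≤ c * (‖x‖ * ‖y‖) := mul_le_mul_of_nonneg_left (hNA.2.1 x y) hc0
  have step2 : ∀ (v : V →L[𝕜] 𝕜), ‖v‖ ≤ 1 → ∀ x : X,
      ‖Stmt11Aux.sF 𝕜 (v.comp (ContinuousLinearMap.apply 𝕜 V x)) L‖ ≤ c * ‖x‖ := by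
    intro v hv x
    refine ContinuousLinearMap.opNorm_le_bound _ (mul_nonneg hc0 (norm_nonneg x)) fun y => ?_
    obtain ⟨w, hw1, hwy⟩ := exists_dual_vector'' 𝕜
      ((Stmt11Aux.sF 𝕜 (v.comp (ContinuousLinearMap.apply 𝕜 V x)) L) y)
    have h1 : ‖(Stmt11Aux.sF 𝕜 (v.comp (ContinuousLinearMap.apply 𝕜 V x)) L) y‖
        = ‖w ((Stmt11Aux.sF 𝕜 (v.comp (ContinuousLinearMap.apply 𝕜 V x)) L) y)‖ := by
      rw [hwy]; simp
    have h2 : w ((Stmt11Aux.sF 𝕜 (v.comp (ContinuousLinearMap.apply 𝕜 V x)) L) y)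
        = dualTensorFun 𝕜 (v.comp (ContinuousLinearMap.apply 𝕜 V x))
            (w.comp (ContinuousLinearMap.apply 𝕜 W y)) L := by
      rw [Stmt11Aux.dtf_eq_sF]
      rfl
    rw [h1, h2]
    calc ‖dualTensorFun 𝕜 (v.comp (ContinuousLinearMap.apply 𝕜 V x))
            (w.comp (ContinuousLinearMap.apply 𝕜 W y)) L‖
        ≤ c * (‖x‖ * ‖y‖) := key v w hv hw1 x y
      _ = c * ‖x‖ * ‖y‖ := by ring
  rw [Stmt11Aux.dtf_eq_rEta]
  have hbound : ‖Stmt11Aux.rEta 𝕜 η L‖ ≤ ‖η‖ * c := by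
    refine ContinuousLinearMap.opNorm_le_bound _ (mul_nonneg (norm_nonneg η) hc0) fun x => ?_
    obtain ⟨v, hv1, hvx⟩ := exists_dual_vector'' 𝕜 ((Stmt11Aux.rEta 𝕜 η L) x)
    have h1 : ‖(Stmt11Aux.rEta 𝕜 η L) x‖ = ‖v ((Stmt11Aux.rEta 𝕜 η L) x)‖ := by
      rw [hvx]; simp
    have h2 : v ((Stmt11Aux.rEta 𝕜 η L) x)
        = dualTensorFun 𝕜 (v.comp (ContinuousLinearMap.apply 𝕜 V x)) η L := by
      rw [Stmt11Aux.dtf_eq_rEta]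
      rfl
    rw [h1, h2, Stmt11Aux.dtf_eq_sF]
    calc ‖η (Stmt11Aux.sF 𝕜 (v.comp (ContinuousLinearMap.apply 𝕜 V x)) L)‖
        ≤ ‖η‖ * ‖Stmt11Aux.sF 𝕜 (v.comp (ContinuousLinearMap.apply 𝕜 V x)) L‖ :=
          η.le_opNorm _
      _ ≤ ‖η‖ * (c * ‖x‖) := mul_le_mul_of_nonneg_left (step2 v hv1 x) (norm_nonneg η)
      _ = ‖η‖ * c * ‖x‖ := by ring
  calc ‖φ (Stmt11Aux.rEta 𝕜 η L)‖ ≤ ‖φ‖ * ‖Stmt11Aux.rEta 𝕜 η L‖ := φ.le_opNorm _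
    _ ≤ ‖φ‖ * (‖η‖ * c) := mul_le_mul_of_nonneg_left hbound (norm_nonneg φ)
    _ = ‖φ‖ * ‖η‖ * c := by ring
end
end

section
/- The operator norm ‖·‖_{[π,ε]} from (X⊗Y,‖·‖_π) to (V⊗W,‖·‖_ε), restricted to B[X,V]⊗B[Y,W], satisfies ‖L‖_ε ≤ ‖L‖_{[π,ε]} ≤ ‖L‖_π for every L ∈ B[X,V]⊗B[Y,W], and hence is a reasonable crossnorm on B[X,V]⊗B[Y,W]. -/
open scoped TensorProduct
open TensorProduct

noncomputable section

variable (𝕜 : Type*) [RCLike 𝕜]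
variable {E F G H : Type*}
  [NormedAddCommGroup E] [NormedSpace 𝕜 E]
  [NormedAddCommGroup F] [NormedSpace 𝕜 F]
  [NormedAddCommGroup G] [NormedSpace 𝕜 G]
  [NormedAddCommGroup H] [NormedSpace 𝕜 H]

section Aux

variable {𝕜}

/-! ### Generic helper lemmas about real `sInf`/`sSup`. -/

private lemma aux_le_mul_csInf {s : Set ℝ} {a c : ℝ} (hc : 0 ≤ c) (hs : s.Nonempty)
    (h : ∀ r ∈ s, a ≤ c * r) : a ≤ c * sInf s := by
  rcases hc.eq_or_lt with rfl | hc
  · obtain ⟨r, hr⟩ := hs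
    simpa using h r hr
  · rw [mul_comm, ← div_le_iff₀ hc]
    refine le_csInf hs fun r hr => ?_
    rw [div_le_iff₀ hc, mul_comm]
    exact h r hr

private lemma aux_csInf_le_mul {S S' : Set ℝ} {c : ℝ} (hc : 0 ≤ c) (hS : S.Nonempty)
    (hS' : BddBelow S') (h : ∀ a ∈ S, c * a ∈ S') : sInf S' ≤ c * sInf S := by
  rcases hc.eq_or_lt with rfl | hc
  · obtain ⟨a, ha⟩ := hS
    simpa using csInf_le hS' (by simpa using h a ha)
  · have hd : sInf S' / c ≤ sInf S := by
      refine le_csInf hS fun a ha => ?_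
      rw [div_le_iff₀ hc]
      exact (csInf_le hS' (h a ha)).trans (le_of_eq (mul_comm c a))
    calc sInf S' = c * (sInf S' / c) := by field_simp
      _ ≤ c * sInf S := by gcongr

private lemma aux_csInf_le_add {S1 S2 S3 : Set ℝ} (h1 : S1.Nonempty) (h2 : S2.Nonempty)
    (hb : BddBelow S3) (h : ∀ a ∈ S1, ∀ b ∈ S2, a + b ∈ S3) :
    sInf S3 ≤ sInf S1 + sInf S2 := by
  rw [add_comm, ← sub_le_iff_le_add]
  refine le_csInf h2 fun b hb2 => ?_
  rw [sub_le_iff_le_add]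
  rw [add_comm, ← sub_le_iff_le_add]
  refine le_csInf h1 fun a ha1 => ?_
  rw [sub_le_iff_le_add]
  exact csInf_le hb (h a ha1 b hb2)

private lemma aux_norm_list_sum_le {α M : Type*} [SeminormedAddCommGroup M]
    (l : List α) (f : α → M) :
    ‖(l.map f).sum‖ ≤ (l.map fun a => ‖f a‖).sum := by
  induction l with
  | nil => simp
  | cons a t ih =>
    simp only [List.map_cons, List.sum_cons]
    exact (norm_add_le _ _).trans (by gcongr)

private lemma aux_list_sum_apply {α R M N : Type*} [Semiring R] [AddCommMonoid M] [Module R M]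
    [AddCommMonoid N] [Module R N] (l : List α) (t : α → (M →ₗ[R] N)) (u : M) :
    (l.map t).sum u = (l.map fun a => t a u).sum := by
  induction l with
  | nil => simp
  | cons a s ih => simp [ih]

private lemma aux_clm_list_sum_apply {α : Type*} (l : List α) (t : α → (E →L[𝕜] G)) (x : E) :
    (l.map t).sum x = (l.map fun a => t a x).sum := by
  induction l with
  | nil => simp
  | cons a s ih => simp [ih]

/-! ### Basic lemmas about `dualTensorFun`. -/

@[simp] lemma dualTensorFun_tmul (f : E →L[𝕜] 𝕜) (g : F →L[𝕜] 𝕜) (x : E) (y : F) :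
    dualTensorFun 𝕜 f g (x ⊗ₜ[𝕜] y) = f x * g y := by
  simp [dualTensorFun]

lemma dualTensorFun_smul_left (c : 𝕜) (f : E →L[𝕜] 𝕜) (g : F →L[𝕜] 𝕜) (u : E ⊗[𝕜] F) :
    dualTensorFun 𝕜 (c • f) g u = c * dualTensorFun 𝕜 f g u := by
  induction u with
  | zero => simp
  | tmul x y => simp [mul_assoc]
  | add u v hu hv => simp only [map_add, hu, hv]; ring

lemma dualTensorFun_smul_right (c : 𝕜) (f : E →L[𝕜] 𝕜) (g : F →L[𝕜] 𝕜) (u : E ⊗[𝕜] F) :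
    dualTensorFun 𝕜 f (c • g) u = c * dualTensorFun 𝕜 f g u := by
  induction u with
  | zero => simp
  | tmul x y => simp; ring
  | add u v hu hv => simp only [map_add, hu, hv]; ring

lemma dualTensorFun_zero_left (g : F →L[𝕜] 𝕜) (u : E ⊗[𝕜] F) :
    dualTensorFun 𝕜 (0 : E →L[𝕜] 𝕜) g u = 0 := by
  induction u with
  | zero => simp
  | tmul x y => simp
  | add u v hu hv => simp only [map_add, hu, hv]; ring

lemma dualTensorFun_zero_right (f : E →L[𝕜] 𝕜) (u : E ⊗[𝕜] F) :
    dualTensorFun 𝕜 f (0 : F →L[𝕜] 𝕜) u = 0 := by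
  induction u with
  | zero => simp
  | tmul x y => simp
  | add u v hu hv => simp only [map_add, hu, hv]; ring

/-! ### The projective norm. -/

/-- The set of values of representations of `u`. -/
def pRep (u : E ⊗[𝕜] F) : Set ℝ :=
  {r | ∃ l : List (E × F), u = (l.map fun p => p.1 ⊗ₜ[𝕜] p.2).sum ∧
    r = (l.map fun p => ‖p.1‖ * ‖p.2‖).sum}

lemma projNorm_eq (u : E ⊗[𝕜] F) : projNorm 𝕜 u = sInf (pRep u) := rfl

lemma exists_list_repr (u : E ⊗[𝕜] F) :
    ∃ l : List (E × F), u = (l.map fun p => p.1 ⊗ₜ[𝕜] p.2).sum := by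
  induction u with
  | zero => exact ⟨[], by simp⟩
  | tmul x y => exact ⟨[(x, y)], by simp⟩
  | add u v hu hv =>
    obtain ⟨l1, h1⟩ := hu
    obtain ⟨l2, h2⟩ := hv
    exact ⟨l1 ++ l2, by simp [h1, h2]⟩

lemma pRep_nonempty (u : E ⊗[𝕜] F) : (pRep u).Nonempty := by
  obtain ⟨l, hl⟩ := exists_list_repr u
  exact ⟨_, l, hl, rfl⟩

lemma pRep_nonneg {u : E ⊗[𝕜] F} {r : ℝ} (hr : r ∈ pRep u) : 0 ≤ r := by
  obtain ⟨l, -, rfl⟩ := hr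
  refine List.sum_nonneg fun a ha => ?_
  obtain ⟨p, -, rfl⟩ := List.mem_map.1 ha
  positivity

lemma pRep_bddBelow (u : E ⊗[𝕜] F) : BddBelow (pRep u) :=
  ⟨0, fun _ hr => pRep_nonneg hr⟩

lemma projNorm_nonneg (u : E ⊗[𝕜] F) : 0 ≤ projNorm 𝕜 u :=
  Real.sInf_nonneg fun _ hr => pRep_nonneg hr

lemma projNorm_le_of_mem {u : E ⊗[𝕜] F} {r : ℝ} (hr : r ∈ pRep u) : projNorm 𝕜 u ≤ r :=
  csInf_le (pRep_bddBelow u) hr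

lemma projNorm_tmul_le (x : E) (y : F) : projNorm 𝕜 (x ⊗ₜ[𝕜] y) ≤ ‖x‖ * ‖y‖ :=
  projNorm_le_of_mem ⟨[(x, y)], by simp, by simp⟩

lemma projNorm_zero_eq : projNorm 𝕜 (0 : E ⊗[𝕜] F) = 0 :=
  le_antisymm (projNorm_le_of_mem ⟨[], by simp, by simp⟩) (projNorm_nonneg 0)

lemma norm_dualTensorFun_le_proj (f : E →L[𝕜] 𝕜) (g : F →L[𝕜] 𝕜) (u : E ⊗[𝕜] F) :
    ‖dualTensorFun 𝕜 f g u‖ ≤ ‖f‖ * ‖g‖ * projNorm 𝕜 u := by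
  rw [projNorm_eq]
  refine aux_le_mul_csInf (by positivity) (pRep_nonempty u) ?_
  rintro r ⟨l, rfl, rfl⟩
  rw [map_list_sum, List.map_map]
  calc ‖(l.map fun p => dualTensorFun 𝕜 f g (p.1 ⊗ₜ[𝕜] p.2)).sum‖
      ≤ (l.map fun p => ‖dualTensorFun 𝕜 f g (p.1 ⊗ₜ[𝕜] p.2)‖).sum := by
        simpa [Function.comp_def] using
          aux_norm_list_sum_le l fun p : E × F => dualTensorFun 𝕜 f g (p.1 ⊗ₜ[𝕜] p.2)
    _ ≤ (l.map fun p => ‖f‖ * ‖g‖ * (‖p.1‖ * ‖p.2‖)).sum := by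
        refine List.sum_le_sum fun p _ => ?_
        rw [dualTensorFun_tmul, norm_mul]
        calc ‖f p.1‖ * ‖g p.2‖ ≤ (‖f‖ * ‖p.1‖) * (‖g‖ * ‖p.2‖) := by
              exact mul_le_mul (f.le_opNorm p.1) (g.le_opNorm p.2) (norm_nonneg _)
                (by positivity)
          _ = ‖f‖ * ‖g‖ * (‖p.1‖ * ‖p.2‖) := by ring
    _ = ‖f‖ * ‖g‖ * (l.map fun p => ‖p.1‖ * ‖p.2‖).sum := by
        rw [← List.sum_map_mul_left]

/-! ### The injective norm. -/

/-- The set of values defining the injective norm. -/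
def iRep (u : E ⊗[𝕜] F) : Set ℝ :=
  {r | ∃ (f : E →L[𝕜] 𝕜) (g : F →L[𝕜] 𝕜),
    ‖f‖ ≤ 1 ∧ ‖g‖ ≤ 1 ∧ r = ‖dualTensorFun 𝕜 f g u‖}

lemma injNorm_eq (u : E ⊗[𝕜] F) : injNorm 𝕜 u = sSup (iRep u) := rfl

lemma iRep_nonempty (u : E ⊗[𝕜] F) : (iRep u).Nonempty :=
  ⟨0, 0, 0, by simp, by simp, by simp [dualTensorFun_zero_left]⟩

lemma iRep_nonneg {u : E ⊗[𝕜] F} {r : ℝ} (hr : r ∈ iRep u) : 0 ≤ r := by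
  obtain ⟨f, g, -, -, rfl⟩ := hr
  positivity

lemma iRep_le_proj {u : E ⊗[𝕜] F} {r : ℝ} (hr : r ∈ iRep u) : r ≤ projNorm 𝕜 u := by
  obtain ⟨f, g, hf, hg, rfl⟩ := hr
  calc ‖dualTensorFun 𝕜 f g u‖ ≤ ‖f‖ * ‖g‖ * projNorm 𝕜 u := norm_dualTensorFun_le_proj f g u
    _ ≤ 1 * 1 * projNorm 𝕜 u := by
        have := projNorm_nonneg (𝕜 := 𝕜) u
        gcongr <;> assumption
    _ = projNorm 𝕜 u := by ring

lemma iRep_bddAbove (u : E ⊗[𝕜] F) : BddAbove (iRep u) :=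
  ⟨projNorm 𝕜 u, fun _ hr => iRep_le_proj hr⟩

lemma injNorm_nonneg (u : E ⊗[𝕜] F) : 0 ≤ injNorm 𝕜 u :=
  Real.sSup_nonneg fun _ hr => iRep_nonneg hr

lemma injNorm_le_proj (u : E ⊗[𝕜] F) : injNorm 𝕜 u ≤ projNorm 𝕜 u :=
  Real.sSup_le (fun _ hr => iRep_le_proj hr) (projNorm_nonneg u)

lemma le_injNorm_of_mem {u : E ⊗[𝕜] F} {r : ℝ} (hr : r ∈ iRep u) : r ≤ injNorm 𝕜 u :=
  le_csSup (iRep_bddAbove u) hr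

lemma norm_dualTensorFun_le_inj (f : E →L[𝕜] 𝕜) (g : F →L[𝕜] 𝕜) (u : E ⊗[𝕜] F) :
    ‖dualTensorFun 𝕜 f g u‖ ≤ ‖f‖ * ‖g‖ * injNorm 𝕜 u := by
  rcases eq_or_ne f 0 with rfl | hf
  · simp [dualTensorFun_zero_left]
  rcases eq_or_ne g 0 with rfl | hg
  · simp [dualTensorFun_zero_right]
  have hf' : (0 : ℝ) < ‖f‖ := norm_pos_iff.2 hf
  have hg' : (0 : ℝ) < ‖g‖ := norm_pos_iff.2 hg
  have hmem : ‖f‖⁻¹ * ‖g‖⁻¹ * ‖dualTensorFun 𝕜 f g u‖ ∈ iRep u := by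
    refine ⟨((‖f‖⁻¹ : ℝ) : 𝕜) • f, ((‖g‖⁻¹ : ℝ) : 𝕜) • g, ?_, ?_, ?_⟩
    · refine ContinuousLinearMap.opNorm_le_bound _ zero_le_one fun v => ?_
      rw [ContinuousLinearMap.smul_apply, norm_smul, RCLike.norm_ofReal,
        abs_of_nonneg (inv_nonneg.2 hf'.le), one_mul]
      rw [inv_mul_le_iff₀ hf']
      exact f.le_opNorm v
    · refine ContinuousLinearMap.opNorm_le_bound _ zero_le_one fun v => ?_
      rw [ContinuousLinearMap.smul_apply, norm_smul, RCLike.norm_ofReal,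
        abs_of_nonneg (inv_nonneg.2 hg'.le), one_mul]
      rw [inv_mul_le_iff₀ hg']
      exact g.le_opNorm v
    · rw [dualTensorFun_smul_left, dualTensorFun_smul_right, ← mul_assoc, norm_mul,
        norm_mul, RCLike.norm_ofReal, RCLike.norm_ofReal,
        abs_of_nonneg (inv_nonneg.2 hf'.le), abs_of_nonneg (inv_nonneg.2 hg'.le)]
  have h1 := le_injNorm_of_mem hmem
  calc ‖dualTensorFun 𝕜 f g u‖
      = ‖f‖ * ‖g‖ * (‖f‖⁻¹ * ‖g‖⁻¹ * ‖dualTensorFun 𝕜 f g u‖) := by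
        field_simp
    _ ≤ ‖f‖ * ‖g‖ * injNorm 𝕜 u := by gcongr

lemma injNorm_tmul_le (x : E) (y : F) : injNorm 𝕜 (x ⊗ₜ[𝕜] y) ≤ ‖x‖ * ‖y‖ := by
  refine Real.sSup_le ?_ (by positivity)
  rintro r ⟨f, g, hf, hg, rfl⟩
  rw [dualTensorFun_tmul, norm_mul]
  calc ‖f x‖ * ‖g y‖ ≤ (‖f‖ * ‖x‖) * (‖g‖ * ‖y‖) :=
        mul_le_mul (f.le_opNorm x) (g.le_opNorm y) (norm_nonneg _) (by positivity)
    _ ≤ (1 * ‖x‖) * (1 * ‖y‖) := by gcongr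
    _ = ‖x‖ * ‖y‖ := by ring

lemma injNorm_zero_eq : injNorm 𝕜 (0 : E ⊗[𝕜] F) = 0 :=
  le_antisymm (by simpa using injNorm_tmul_le (0 : E) (0 : F)) (injNorm_nonneg 0)

lemma injNorm_add_le (u v : E ⊗[𝕜] F) :
    injNorm 𝕜 (u + v) ≤ injNorm 𝕜 u + injNorm 𝕜 v := by
  have h1 := injNorm_nonneg (𝕜 := 𝕜) u
  have h2 := injNorm_nonneg (𝕜 := 𝕜) v
  refine Real.sSup_le ?_ (by linarith)
  rintro r ⟨f, g, hf, hg, rfl⟩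
  rw [map_add]
  calc ‖dualTensorFun 𝕜 f g u + dualTensorFun 𝕜 f g v‖
      ≤ ‖dualTensorFun 𝕜 f g u‖ + ‖dualTensorFun 𝕜 f g v‖ := norm_add_le _ _
    _ ≤ injNorm 𝕜 u + injNorm 𝕜 v :=
        add_le_add (le_injNorm_of_mem ⟨f, g, hf, hg, rfl⟩)
          (le_injNorm_of_mem ⟨f, g, hf, hg, rfl⟩)

lemma injNorm_smul_le (c : 𝕜) (u : E ⊗[𝕜] F) :
    injNorm 𝕜 (c • u) ≤ ‖c‖ * injNorm 𝕜 u := by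
  have h0 := injNorm_nonneg (𝕜 := 𝕜) u
  refine Real.sSup_le ?_ (by positivity)
  rintro r ⟨f, g, hf, hg, rfl⟩
  rw [map_smul, smul_eq_mul, norm_mul]
  exact mul_le_mul_of_nonneg_left (le_injNorm_of_mem ⟨f, g, hf, hg, rfl⟩) (norm_nonneg c)

lemma injNorm_smul (c : 𝕜) (u : E ⊗[𝕜] F) :
    injNorm 𝕜 (c • u) = ‖c‖ * injNorm 𝕜 u := by
  rcases eq_or_ne c 0 with rfl | hc
  · simp [injNorm_zero_eq]
  refine le_antisymm (injNorm_smul_le c u) ?_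
  have h := injNorm_smul_le c⁻¹ (c • u)
  rw [smul_smul, inv_mul_cancel₀ hc, one_smul, norm_inv] at h
  calc ‖c‖ * injNorm 𝕜 u ≤ ‖c‖ * (‖c‖⁻¹ * injNorm 𝕜 (c • u)) := by gcongr
    _ = injNorm 𝕜 (c • u) := by
        rw [← mul_assoc, mul_inv_cancel₀ (norm_ne_zero_iff.2 hc), one_mul]

lemma injNorm_list_sum_le {α : Type*} (l : List α) (t : α → E ⊗[𝕜] F) :
    injNorm 𝕜 (l.map t).sum ≤ (l.map fun a => injNorm 𝕜 (t a)).sum := by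
  induction l with
  | nil => simp [injNorm_zero_eq]
  | cons a s ih =>
    simp only [List.map_cons, List.sum_cons]
    exact (injNorm_add_le _ _).trans (by gcongr)

/-! ### Lemmas about `opT`. -/

lemma opT_tmul (A : E →L[𝕜] G) (B : F →L[𝕜] H) :
    opT 𝕜 (A ⊗ₜ[𝕜] B) = TensorProduct.map (A : E →ₗ[𝕜] G) (B : F →ₗ[𝕜] H) := by
  simp [opT]

lemma opT_repr_apply (lL : List ((E →L[𝕜] G) × (F →L[𝕜] H))) (u : E ⊗[𝕜] F) :
    opT 𝕜 ((lL.map fun p => p.1 ⊗ₜ[𝕜] p.2).sum) u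
      = (lL.map fun p =>
          TensorProduct.map (p.1 : E →ₗ[𝕜] G) (p.2 : F →ₗ[𝕜] H) u).sum := by
  induction lL with
  | nil => simp
  | cons p t ih => simp [opT_tmul, ih]

lemma map_repr_apply (A : E →L[𝕜] G) (B : F →L[𝕜] H) (lu : List (E × F)) :
    TensorProduct.map (A : E →ₗ[𝕜] G) (B : F →ₗ[𝕜] H) ((lu.map fun q => q.1 ⊗ₜ[𝕜] q.2).sum)
      = (lu.map fun q => (A q.1) ⊗ₜ[𝕜] (B q.2)).sum := by
  induction lu with
  | nil => simp
  | cons q t ih => simp [ih]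

lemma dtf_repr (f : (E →L[𝕜] G) →L[𝕜] 𝕜) (g : (F →L[𝕜] H) →L[𝕜] 𝕜)
    (lL : List ((E →L[𝕜] G) × (F →L[𝕜] H))) :
    dualTensorFun 𝕜 f g ((lL.map fun p => p.1 ⊗ₜ[𝕜] p.2).sum)
      = f ((lL.map fun p => g p.2 • p.1).sum) := by
  induction lL with
  | nil => simp
  | cons p t ih =>
    simp only [List.map_cons, List.sum_cons, map_add, dualTensorFun_tmul, map_smul,
      smul_eq_mul, ih]
    ring

lemma slice_apply (g : (F →L[𝕜] H) →L[𝕜] 𝕜) (φ : G →L[𝕜] 𝕜) (x : E)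
    (lL : List ((E →L[𝕜] G) × (F →L[𝕜] H))) :
    φ (((lL.map fun p => g p.2 • p.1).sum : E →L[𝕜] G) x)
      = g ((lL.map fun p => φ (p.1 x) • p.2).sum) := by
  induction lL with
  | nil => simp
  | cons p t ih =>
    simp only [List.map_cons, List.sum_cons, ContinuousLinearMap.add_apply,
      ContinuousLinearMap.smul_apply, map_add, map_smul, smul_eq_mul, ih]
    ring

lemma slice_apply2 (φ : G →L[𝕜] 𝕜) (ψ : H →L[𝕜] 𝕜) (x : E) (y : F)
    (lL : List ((E →L[𝕜] G) × (F →L[𝕜] H))) :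
    ψ (((lL.map fun p => φ (p.1 x) • p.2).sum : F →L[𝕜] H) y)
      = dualTensorFun 𝕜 φ ψ (opT 𝕜 ((lL.map fun p => p.1 ⊗ₜ[𝕜] p.2).sum) (x ⊗ₜ[𝕜] y)) := by
  induction lL with
  | nil => simp
  | cons p t ih =>
    simp only [List.map_cons, List.sum_cons, ContinuousLinearMap.add_apply,
      ContinuousLinearMap.smul_apply, map_add, LinearMap.add_apply, map_smul, smul_eq_mul,
      opT_tmul, TensorProduct.map_tmul, dualTensorFun_tmul, ContinuousLinearMap.coe_coe, ih]

/-- The set of operator-bounds. -/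
def oC (L : (E →L[𝕜] G) ⊗[𝕜] (F →L[𝕜] H)) : Set ℝ :=
  {c | 0 ≤ c ∧ ∀ u : E ⊗[𝕜] F, injNorm 𝕜 (opT 𝕜 L u) ≤ c * projNorm 𝕜 u}

lemma opNormOn_eq (L : (E →L[𝕜] G) ⊗[𝕜] (F →L[𝕜] H)) :
    opNormOn 𝕜 (projNorm 𝕜) (injNorm 𝕜) (opT 𝕜 L) = sInf (oC L) := rfl

lemma oC_bddBelow (L : (E →L[𝕜] G) ⊗[𝕜] (F →L[𝕜] H)) : BddBelow (oC L) :=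
  ⟨0, fun _ hc => hc.1⟩

lemma injNorm_opT_le_list (lL : List ((E →L[𝕜] G) × (F →L[𝕜] H))) (u : E ⊗[𝕜] F) :
    injNorm 𝕜 (opT 𝕜 ((lL.map fun p => p.1 ⊗ₜ[𝕜] p.2).sum) u)
      ≤ (lL.map fun p => ‖p.1‖ * ‖p.2‖).sum * projNorm 𝕜 u := by
  rw [projNorm_eq]
  refine aux_le_mul_csInf ?_ (pRep_nonempty u) ?_
  · refine List.sum_nonneg fun a ha => ?_
    obtain ⟨p, -, rfl⟩ := List.mem_map.1 ha
    positivity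
  rintro r ⟨lu, rfl, rfl⟩
  have hrw : opT 𝕜 ((lL.map fun p => p.1 ⊗ₜ[𝕜] p.2).sum) ((lu.map fun q => q.1 ⊗ₜ[𝕜] q.2).sum)
      = (lL.map fun p =>
          (lu.map fun q => (p.1 q.1) ⊗ₜ[𝕜] (p.2 q.2)).sum).sum := by
    rw [opT_repr_apply]
    refine congrArg List.sum (List.map_congr_left fun p _ => ?_)
    rw [map_repr_apply]
  rw [hrw]
  calc injNorm 𝕜 ((lL.map fun p => (lu.map fun q => (p.1 q.1) ⊗ₜ[𝕜] (p.2 q.2)).sum).sum)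
      ≤ (lL.map fun p => injNorm 𝕜 ((lu.map fun q => (p.1 q.1) ⊗ₜ[𝕜] (p.2 q.2)).sum)).sum :=
        injNorm_list_sum_le lL _
    _ ≤ (lL.map fun p => (‖p.1‖ * ‖p.2‖) * (lu.map fun q => ‖q.1‖ * ‖q.2‖).sum).sum := by
        refine List.sum_le_sum fun p _ => ?_
        calc injNorm 𝕜 ((lu.map fun q => (p.1 q.1) ⊗ₜ[𝕜] (p.2 q.2)).sum)
            ≤ (lu.map fun q => injNorm 𝕜 ((p.1 q.1) ⊗ₜ[𝕜] (p.2 q.2))).sum :=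
              injNorm_list_sum_le lu _
          _ ≤ (lu.map fun q => (‖p.1‖ * ‖p.2‖) * (‖q.1‖ * ‖q.2‖)).sum := by
              refine List.sum_le_sum fun q _ => ?_
              refine (injNorm_tmul_le _ _).trans ?_
              calc ‖p.1 q.1‖ * ‖p.2 q.2‖
                  ≤ (‖p.1‖ * ‖q.1‖) * (‖p.2‖ * ‖q.2‖) :=
                    mul_le_mul (p.1.le_opNorm q.1) (p.2.le_opNorm q.2) (norm_nonneg _)
                      (by positivity)
                _ = (‖p.1‖ * ‖p.2‖) * (‖q.1‖ * ‖q.2‖) := by ring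
          _ = (‖p.1‖ * ‖p.2‖) * (lu.map fun q => ‖q.1‖ * ‖q.2‖).sum := by
              rw [← List.sum_map_mul_left]
    _ = (lL.map fun p => ‖p.1‖ * ‖p.2‖).sum * (lu.map fun q => ‖q.1‖ * ‖q.2‖).sum := by
        rw [← List.sum_map_mul_right]

lemma pRep_subset_oC (L : (E →L[𝕜] G) ⊗[𝕜] (F →L[𝕜] H)) : pRep L ⊆ oC L := by
  rintro r ⟨lL, rfl, rfl⟩
  exact ⟨List.sum_nonneg fun a ha => by
      obtain ⟨p, -, rfl⟩ := List.mem_map.1 ha; positivity,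
    fun u => injNorm_opT_le_list lL u⟩

lemma oC_nonempty (L : (E →L[𝕜] G) ⊗[𝕜] (F →L[𝕜] H)) : (oC L).Nonempty :=
  (pRep_nonempty L).mono (pRep_subset_oC L)

lemma opN_le_proj (L : (E →L[𝕜] G) ⊗[𝕜] (F →L[𝕜] H)) :
    opNormOn 𝕜 (projNorm 𝕜) (injNorm 𝕜) (opT 𝕜 L) ≤ projNorm 𝕜 L := by
  rw [opNormOn_eq, projNorm_eq]
  exact csInf_le_csInf (oC_bddBelow L) (pRep_nonempty L) (pRep_subset_oC L)

lemma opN_nonneg (L : (E →L[𝕜] G) ⊗[𝕜] (F →L[𝕜] H)) :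
    0 ≤ opNormOn 𝕜 (projNorm 𝕜) (injNorm 𝕜) (opT 𝕜 L) :=
  Real.sInf_nonneg fun _ hc => hc.1

/-! ### The key inequality: `injNorm L ≤ opNormOn L`. -/

lemma inj_le_opN (L : (E →L[𝕜] G) ⊗[𝕜] (F →L[𝕜] H)) :
    injNorm 𝕜 L ≤ opNormOn 𝕜 (projNorm 𝕜) (injNorm 𝕜) (opT 𝕜 L) := by
  refine Real.sSup_le ?_ (opN_nonneg L)
  rintro r ⟨f, g, hf, hg, rfl⟩
  rw [opNormOn_eq]
  refine le_csInf (oC_nonempty L) ?_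
  rintro c ⟨hc0, hc⟩
  obtain ⟨lL, hL⟩ := exists_list_repr L
  subst hL
  -- the `g`-slice of `L`
  set Af : E →L[𝕜] G := (lL.map fun p => g p.2 • p.1).sum with hAf
  have step1 : dualTensorFun 𝕜 f g ((lL.map fun p => p.1 ⊗ₜ[𝕜] p.2).sum) = f Af :=
    dtf_repr f g lL
  -- bound `‖Af‖` by `c`
  have hAfle : ‖Af‖ ≤ c := by
    refine ContinuousLinearMap.opNorm_le_bound Af hc0 fun x => ?_
    obtain ⟨φ, hφ, hφx⟩ := exists_dual_vector'' 𝕜 (Af x)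
    set D : F →L[𝕜] H := (lL.map fun p => φ (p.1 x) • p.2).sum with hD
    have step2 : φ (Af x) = g D := slice_apply g φ x lL
    have hDle : ‖D‖ ≤ c * ‖x‖ := by
      refine ContinuousLinearMap.opNorm_le_bound D (by positivity) fun y => ?_
      obtain ⟨ψ, hψ, hψy⟩ := exists_dual_vector'' 𝕜 (D y)
      have step3 : ψ (D y) = dualTensorFun 𝕜 φ ψ
          (opT 𝕜 ((lL.map fun p => p.1 ⊗ₜ[𝕜] p.2).sum) (x ⊗ₜ[𝕜] y)) :=
        slice_apply2 φ ψ x y lL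
      have : ‖D y‖ = ‖ψ (D y)‖ := by
        rw [hψy, RCLike.norm_ofReal, abs_of_nonneg (norm_nonneg _)]
      rw [this, step3]
      set LL := (lL.map fun p => p.1 ⊗ₜ[𝕜] p.2).sum with hLL
      calc ‖dualTensorFun 𝕜 φ ψ (opT 𝕜 LL (x ⊗ₜ[𝕜] y))‖
          ≤ ‖φ‖ * ‖ψ‖ * injNorm 𝕜 (opT 𝕜 LL (x ⊗ₜ[𝕜] y)) :=
            norm_dualTensorFun_le_inj φ ψ _
        _ ≤ 1 * 1 * injNorm 𝕜 (opT 𝕜 LL (x ⊗ₜ[𝕜] y)) := by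
            have := injNorm_nonneg (𝕜 := 𝕜) (opT 𝕜 LL (x ⊗ₜ[𝕜] y))
            gcongr <;> assumption
        _ = injNorm 𝕜 (opT 𝕜 LL (x ⊗ₜ[𝕜] y)) := by ring
        _ ≤ c * projNorm 𝕜 (x ⊗ₜ[𝕜] y) := hc _
        _ ≤ c * (‖x‖ * ‖y‖) := by
            exact mul_le_mul_of_nonneg_left (projNorm_tmul_le x y) hc0
        _ = c * ‖x‖ * ‖y‖ := by ring
    have : ‖Af x‖ = ‖φ (Af x)‖ := by
      rw [hφx, RCLike.norm_ofReal, abs_of_nonneg (norm_nonneg _)]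
    rw [this, step2]
    calc ‖g D‖ ≤ ‖g‖ * ‖D‖ := g.le_opNorm D
      _ ≤ 1 * (c * ‖x‖) := by
          have := norm_nonneg D
          gcongr <;> assumption
      _ = c * ‖x‖ := by ring
  calc ‖dualTensorFun 𝕜 f g ((lL.map fun p => p.1 ⊗ₜ[𝕜] p.2).sum)‖ = ‖f Af‖ := by
        rw [step1]
    _ ≤ ‖f‖ * ‖Af‖ := f.le_opNorm Af
    _ ≤ 1 * c := by
        have := norm_nonneg Af
        gcongr <;> assumption
    _ = c := one_mul c

/-! ### Separation: the injective norm is definite. -/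

lemma eq_zero_of_forall_dualTensorFun_eq_zero (u : E ⊗[𝕜] F)
    (h : ∀ (f : E →L[𝕜] 𝕜) (g : F →L[𝕜] 𝕜), dualTensorFun 𝕜 f g u = 0) : u = 0 := by
  classical
  obtain ⟨s, hs⟩ := TensorProduct.exists_finset u
  set p : Submodule 𝕜 F := Submodule.span 𝕜 (↑(s.image Prod.snd) : Set F) with hp
  have : FiniteDimensional 𝕜 p := FiniteDimensional.span_finset 𝕜 _
  set n := Module.finrank 𝕜 p with hn
  set b : Module.Basis (Fin n) 𝕜 p := Module.finBasis 𝕜 p with hb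
  set w : Fin n → F := fun j => ((b j : p) : F) with hw
  have hwli : LinearIndependent 𝕜 w :=
    b.linearIndependent.map' p.subtype (Submodule.ker_subtype p)
  have hmem : ∀ q ∈ s, (q : E × F).2 ∈ p := fun q hq =>
    Submodule.subset_span (Finset.mem_coe.2 (Finset.mem_image_of_mem Prod.snd hq))
  set y' : E × F → p := fun q => if hq : q.2 ∈ p then (⟨q.2, hq⟩ : p) else 0 with hy'
  set z : Fin n → E := fun j => ∑ q ∈ s, (b.repr (y' q) j) • q.1 with hz
  have hu : u = ∑ j, z j ⊗ₜ[𝕜] w j := by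
    rw [hs]
    calc ∑ q ∈ s, q.1 ⊗ₜ[𝕜] q.2
        = ∑ q ∈ s, ∑ j, (b.repr (y' q) j) • q.1 ⊗ₜ[𝕜] w j := by
          refine Finset.sum_congr rfl fun q hq => ?_
          have hq2 : ((y' q : p) : F) = q.2 := by simp [hy', hmem q hq]
          conv_lhs => rw [← hq2, ← b.sum_repr (y' q)]
          rw [Submodule.coe_sum, tmul_sum]
          refine Finset.sum_congr rfl fun j _ => ?_
          rw [Submodule.coe_smul, tmul_smul]
      _ = ∑ j, ∑ q ∈ s, (b.repr (y' q) j • q.1) ⊗ₜ[𝕜] w j := by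
          rw [Finset.sum_comm]
          refine Finset.sum_congr rfl fun j _ => Finset.sum_congr rfl fun q _ => ?_
          rw [smul_tmul']
      _ = ∑ j, z j ⊗ₜ[𝕜] w j := by
          refine Finset.sum_congr rfl fun j _ => ?_
          rw [hz, ← TensorProduct.sum_tmul]
  have hzero : ∀ j, z j = 0 := by
    intro j
    by_contra hzj
    obtain ⟨f, hfz⟩ := SeparatingDual.exists_ne_zero (R := 𝕜) hzj
    have hv : ∑ i, f (z i) • w i = 0 := by
      by_contra hv0
      obtain ⟨g, hgv⟩ := SeparatingDual.exists_ne_zero (R := 𝕜) hv0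
      apply hgv
      have := h f g
      rw [hu, map_sum] at this
      simpa [map_sum, dualTensorFun_tmul, smul_eq_mul] using this
    have := (Fintype.linearIndependent_iff.1 hwli) (fun i => f (z i)) hv j
    exact hfz this
  rw [hu]
  simp [hzero]

/-! ### Norm axioms for the operator norm. -/

lemma opN_zero_eq :
    opNormOn 𝕜 (projNorm 𝕜) (injNorm 𝕜) (opT 𝕜 (0 : (E →L[𝕜] G) ⊗[𝕜] (F →L[𝕜] H))) = 0 := by
  refine le_antisymm ((opN_le_proj 0).trans ?_) (opN_nonneg 0)
  rw [projNorm_zero_eq]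

lemma opN_smul_le (c : 𝕜) (L : (E →L[𝕜] G) ⊗[𝕜] (F →L[𝕜] H)) :
    opNormOn 𝕜 (projNorm 𝕜) (injNorm 𝕜) (opT 𝕜 (c • L))
      ≤ ‖c‖ * opNormOn 𝕜 (projNorm 𝕜) (injNorm 𝕜) (opT 𝕜 L) := by
  rw [opNormOn_eq, opNormOn_eq]
  refine aux_csInf_le_mul (norm_nonneg c) (oC_nonempty L) (oC_bddBelow _) ?_
  rintro a ⟨ha0, ha⟩
  refine ⟨by positivity, fun u => ?_⟩
  rw [map_smul, LinearMap.smul_apply, injNorm_smul]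
  calc ‖c‖ * injNorm 𝕜 (opT 𝕜 L u) ≤ ‖c‖ * (a * projNorm 𝕜 u) := by
        exact mul_le_mul_of_nonneg_left (ha u) (norm_nonneg c)
    _ = ‖c‖ * a * projNorm 𝕜 u := by ring

lemma opN_smul (c : 𝕜) (L : (E →L[𝕜] G) ⊗[𝕜] (F →L[𝕜] H)) :
    opNormOn 𝕜 (projNorm 𝕜) (injNorm 𝕜) (opT 𝕜 (c • L))
      = ‖c‖ * opNormOn 𝕜 (projNorm 𝕜) (injNorm 𝕜) (opT 𝕜 L) := by
  rcases eq_or_ne c 0 with rfl | hc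
  · rw [zero_smul, norm_zero, zero_mul]
    exact opN_zero_eq
  refine le_antisymm (opN_smul_le c L) ?_
  have h := opN_smul_le c⁻¹ (c • L)
  rw [smul_smul, inv_mul_cancel₀ hc, one_smul, norm_inv] at h
  calc ‖c‖ * opNormOn 𝕜 (projNorm 𝕜) (injNorm 𝕜) (opT 𝕜 L)
      ≤ ‖c‖ * (‖c‖⁻¹ * opNormOn 𝕜 (projNorm 𝕜) (injNorm 𝕜) (opT 𝕜 (c • L))) := by gcongr
    _ = opNormOn 𝕜 (projNorm 𝕜) (injNorm 𝕜) (opT 𝕜 (c • L)) := by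
        have : ‖c‖ ≠ 0 := norm_ne_zero_iff.2 hc
        field_simp

lemma opN_add_le (L1 L2 : (E →L[𝕜] G) ⊗[𝕜] (F →L[𝕜] H)) :
    opNormOn 𝕜 (projNorm 𝕜) (injNorm 𝕜) (opT 𝕜 (L1 + L2))
      ≤ opNormOn 𝕜 (projNorm 𝕜) (injNorm 𝕜) (opT 𝕜 L1)
        + opNormOn 𝕜 (projNorm 𝕜) (injNorm 𝕜) (opT 𝕜 L2) := by
  rw [opNormOn_eq, opNormOn_eq, opNormOn_eq]
  refine aux_csInf_le_add (oC_nonempty L1) (oC_nonempty L2) (oC_bddBelow _) ?_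
  rintro a ⟨ha0, ha⟩ b ⟨hb0, hb⟩
  refine ⟨by positivity, fun u => ?_⟩
  rw [map_add, LinearMap.add_apply]
  calc injNorm 𝕜 (opT 𝕜 L1 u + opT 𝕜 L2 u)
      ≤ injNorm 𝕜 (opT 𝕜 L1 u) + injNorm 𝕜 (opT 𝕜 L2 u) := injNorm_add_le _ _
    _ ≤ a * projNorm 𝕜 u + b * projNorm 𝕜 u := add_le_add (ha u) (hb u)
    _ = (a + b) * projNorm 𝕜 u := by ring

lemma opN_eq_zero_iff (L : (E →L[𝕜] G) ⊗[𝕜] (F →L[𝕜] H)) :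
    opNormOn 𝕜 (projNorm 𝕜) (injNorm 𝕜) (opT 𝕜 L) = 0 ↔ L = 0 := by
  constructor
  · intro h0
    have hinj : injNorm 𝕜 L = 0 :=
      le_antisymm (by rw [← h0]; exact inj_le_opN L) (injNorm_nonneg L)
    refine eq_zero_of_forall_dualTensorFun_eq_zero L fun f g => ?_
    have := norm_dualTensorFun_le_inj f g L
    rw [hinj, mul_zero] at this
    exact norm_le_zero_iff.1 this
  · rintro rfl
    exact opN_zero_eq

end Aux

variable {X Y V W : Type*}
  [NormedAddCommGroup X] [NormedSpace 𝕜 X]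
  [NormedAddCommGroup Y] [NormedSpace 𝕜 Y]
  [NormedAddCommGroup V] [NormedSpace 𝕜 V]
  [NormedAddCommGroup W] [NormedSpace 𝕜 W]

/-- `‖L‖_ε ≤ ‖L‖_{[π,ε]} ≤ ‖L‖_π` on `B[X,V] ⊗ B[Y,W]`, hence `‖·‖_{[π,ε]}`
is a reasonable crossnorm there. -/
theorem stmt14 :
    (∀ L : (X →L[𝕜] V) ⊗[𝕜] (Y →L[𝕜] W),
      injNorm 𝕜 L ≤ opNormOn 𝕜 (projNorm 𝕜) (injNorm 𝕜) (opT 𝕜 L) ∧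
      opNormOn 𝕜 (projNorm 𝕜) (injNorm 𝕜) (opT 𝕜 L) ≤ projNorm 𝕜 L) ∧
    IsReasonableCrossnorm 𝕜
      (fun L : (X →L[𝕜] V) ⊗[𝕜] (Y →L[𝕜] W) =>
        opNormOn 𝕜 (projNorm 𝕜) (injNorm 𝕜) (opT 𝕜 L)) := by
  refine ⟨fun L => ⟨inj_le_opN L, opN_le_proj L⟩, ⟨⟨?_, ?_, ?_⟩, ?_, ?_⟩⟩
  · exact fun L => opN_eq_zero_iff L
  · exact fun c L => opN_smul c L
  · exact fun L1 L2 => opN_add_le L1 L2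
  · exact fun A B => (opN_le_proj (A ⊗ₜ[𝕜] B)).trans (projNorm_tmul_le A B)
  · intro f g L
    calc ‖dualTensorFun 𝕜 f g L‖ ≤ ‖f‖ * ‖g‖ * injNorm 𝕜 L :=
          norm_dualTensorFun_le_inj f g L
      _ ≤ ‖f‖ * ‖g‖ * opNormOn 𝕜 (projNorm 𝕜) (injNorm 𝕜) (opT 𝕜 L) := by
          exact mul_le_mul_of_nonneg_left (inj_le_opN L) (by positivity)
end
end
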